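/- If G is a nontrivial connected well-dominated graph having an isolatable vertex, then G □ H is not well-dominated for any nontrivial connected graph H. In particular, if G is a connected well-dominated graph of order at least 3 and G □ H is well-dominated for some nontrivial connected graph H, then the minimum degree of G is at least 2. -/

import Mathlib

open SimpleGraph

variable {V : Type*}

/-- Closed neighborhood of a vertex. -/
def closedNbhd (G : SimpleGraph V) (v : V) : Set V := insert v (G.neighborSet v)

/-- Closed neighborhood of a set of vertices. -/
def closedNbhdSet (G : SimpleGraph V) (A : Set V) : Set V := ⋃ a ∈ A, closedNbhd G a

/-- `D` is a dominating set of `G`. -/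
def IsDomSet (G : SimpleGraph V) (D : Set V) : Prop :=
  ∀ v, ∃ u ∈ D, v ∈ closedNbhd G u

/-- `D` is a minimal dominating set of `G`. -/
def IsMinimalDomSet (G : SimpleGraph V) (D : Set V) : Prop :=
  IsDomSet G D ∧ ∀ D' ⊆ D, IsDomSet G D' → D' = D

/-- The domination number `γ`. -/
noncomputable def domNum (G : SimpleGraph V) : ℕ :=
  sInf {n | ∃ D : Set V, IsDomSet G D ∧ D.ncard = n}

/-- The upper domination number `Γ`. -/
noncomputable def upperDomNum (G : SimpleGraph V) : ℕ :=
  sSup {n | ∃ D : Set V, IsMinimalDomSet G D ∧ D.ncard = n}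

/-- A graph is well-dominated if `γ = Γ`. -/
def WellDominated (G : SimpleGraph V) : Prop := domNum G = upperDomNum G

/-- `A` is an independent set of `G`. -/
def IsIndep (G : SimpleGraph V) (A : Set V) : Prop :=
  ∀ u ∈ A, ∀ v ∈ A, ¬ G.Adj u v

/-- `A` is a maximal independent set of `G`. -/
def IsMaxIndep (G : SimpleGraph V) (A : Set V) : Prop :=
  IsIndep G A ∧ ∀ B, IsIndep G B → A ⊆ B → B = A

/-- The independence number `α`. -/
noncomputable def indepNum (G : SimpleGraph V) : ℕ :=
  sSup {n | ∃ A : Set V, IsIndep G A ∧ A.ncard = n}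

/-- The strong product of two graphs. -/
def strongProd {α β : Type*} (G : SimpleGraph α) (H : SimpleGraph β) :
    SimpleGraph (α × β) where
  Adj x y := x ≠ y ∧ (x.1 = y.1 ∨ G.Adj x.1 y.1) ∧ (x.2 = y.2 ∨ H.Adj x.2 y.2)
  symm := by
    refine ⟨?_⟩
    rintro x y ⟨h1, h2, h3⟩
    refine ⟨h1.symm, ?_, ?_⟩
    · cases h2 with
      | inl h => exact Or.inl h.symm
      | inr h => exact Or.inr h.symm
    · cases h3 with
      | inl h => exact Or.inl h.symm
      | inr h => exact Or.inr h.symm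
  loopless := ⟨by rintro x ⟨h1, _⟩; exact h1 rfl⟩

/-- The direct (tensor) product of two graphs. -/
def tensorProd {α β : Type*} (G : SimpleGraph α) (H : SimpleGraph β) :
    SimpleGraph (α × β) where
  Adj x y := G.Adj x.1 y.1 ∧ H.Adj x.2 y.2
  symm := ⟨fun _ _ h => ⟨h.1.symm, h.2.symm⟩⟩
  loopless := ⟨fun _ h => G.irrefl h.1⟩

/-- The corona `G ⊙ K₁`. -/
def corona {α : Type*} (G : SimpleGraph α) : SimpleGraph (α ⊕ α) :=
  SimpleGraph.fromRel (fun x y =>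
    match x, y with
    | Sum.inl u, Sum.inl v => G.Adj u v
    | Sum.inl u, Sum.inr v => u = v
    | _, _ => False)

/-- The private neighborhood `pn[u,D] = N[u] - N[D - {u}]`. -/
def privateNbhd (G : SimpleGraph V) (D : Set V) (u : V) : Set V :=
  {x | x ∈ closedNbhd G u ∧ ∀ d ∈ D, d ≠ u → x ∉ closedNbhd G d}

/-- A set `D` is open irredundant if every vertex of `D` has an external
private neighbor. -/
def IsOpenIrred (G : SimpleGraph V) (D : Set V) : Prop :=
  ∀ u ∈ D, ∃ x ∈ G.neighborSet u, ∀ d ∈ D, d ≠ u → x ∉ closedNbhd G d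

/-- A vertex `x` is isolatable if some independent set `I` isolates it in `G - N[I]`. -/
def Isolatable {V : Type*} (G : SimpleGraph V) (x : V) : Prop :=
  ∃ I : Set V, IsIndep G I ∧ x ∉ closedNbhdSet G I ∧
    ∀ y, G.Adj x y → y ∈ closedNbhdSet G I

section AuxLemmas

variable {W : Type*}

lemma mem_closedNbhd' {G : SimpleGraph W} {u v : W} :
    u ∈ closedNbhd G v ↔ u = v ∨ G.Adj v u := by
  simp [closedNbhd, SimpleGraph.mem_neighborSet]

lemma self_mem_closedNbhd' (G : SimpleGraph W) (v : W) : v ∈ closedNbhd G v :=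
  Set.mem_insert _ _

lemma isDomSet_univ' (G : SimpleGraph W) : IsDomSet G Set.univ :=
  fun v => ⟨v, Set.mem_univ v, self_mem_closedNbhd' G v⟩

lemma domNum_le_ncard' {G : SimpleGraph W} {D : Set W} (h : IsDomSet G D) :
    domNum G ≤ D.ncard :=
  Nat.sInf_le ⟨D, h, rfl⟩

lemma exists_domNum_set' (G : SimpleGraph W) :
    ∃ D : Set W, IsDomSet G D ∧ D.ncard = domNum G := by
  have h : domNum G ∈ {n | ∃ D : Set W, IsDomSet G D ∧ D.ncard = n} :=
    Nat.sInf_mem ⟨(Set.univ : Set W).ncard, Set.univ, isDomSet_univ' G, rfl⟩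
  obtain ⟨D, hD, hc⟩ := h
  exact ⟨D, hD, hc⟩

lemma ncard_le_upperDomNum' [Fintype W] {G : SimpleGraph W} {D : Set W}
    (h : IsMinimalDomSet G D) : D.ncard ≤ upperDomNum G := by
  refine le_csSup ⟨Fintype.card W, ?_⟩ ⟨D, h, rfl⟩
  rintro n ⟨D', _, rfl⟩
  calc D'.ncard ≤ (Set.univ : Set W).ncard :=
        Set.ncard_le_ncard (Set.subset_univ _) Set.finite_univ
    _ = Fintype.card W := by rw [Set.ncard_univ, Nat.card_eq_fintype_card]

lemma exists_adj_of_connected' [Fintype W] {G : SimpleGraph W} (hc : G.Connected)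
    (hcard : 2 ≤ Fintype.card W) (v : W) : ∃ u, G.Adj v u := by
  obtain ⟨w, hw⟩ := Fintype.exists_ne_of_one_lt_card (by omega) v
  obtain ⟨p⟩ := hc.preconnected v w
  cases p with
  | nil => exact absurd rfl hw
  | cons h _ => exact ⟨_, h⟩

lemma exists_maxIndep_superset' [Fintype W] (G : SimpleGraph W) {A : Set W}
    (hA : IsIndep G A) : ∃ M, IsMaxIndep G M ∧ A ⊆ M := by
  classical
  have hfin : {B : Set W | IsIndep G B ∧ A ⊆ B}.Finite := Set.toFinite _
  obtain ⟨M, hM, hmax⟩ := Set.Finite.exists_maximalFor Set.ncard _ hfin ⟨A, hA, subset_rfl⟩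
  refine ⟨M, ⟨hM.1, ?_⟩, hM.2⟩
  intro B hB hMB
  have hmem : B ∈ {B : Set W | IsIndep G B ∧ A ⊆ B} := ⟨hB, hM.2.trans hMB⟩
  have h1 := hmax (j := B) hmem (Set.ncard_le_ncard hMB (Set.toFinite B))
  exact (Set.eq_of_subset_of_ncard_le hMB h1.ge (Set.toFinite B)).symm

lemma maxIndep_isMinimalDomSet' {G : SimpleGraph W} {M : Set W}
    (hM : IsMaxIndep G M) : IsMinimalDomSet G M := by
  obtain ⟨hind, hmax⟩ := hM
  have hdom : IsDomSet G M := by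
    intro v
    by_cases hv : v ∈ M
    · exact ⟨v, hv, self_mem_closedNbhd' G v⟩
    · by_contra hcon
      push_neg at hcon
      have hins : IsIndep G (insert v M) := by
        intro a ha b hb hadj
        rcases Set.mem_insert_iff.1 ha with rfl | ha'
        · rcases Set.mem_insert_iff.1 hb with rfl | hb'
          · exact G.loopless.irrefl _ hadj
          · exact hcon b hb' (mem_closedNbhd'.2 (Or.inr hadj.symm))
        · rcases Set.mem_insert_iff.1 hb with rfl | hb'
          · exact hcon a ha' (mem_closedNbhd'.2 (Or.inr hadj))
          · exact hind a ha' b hb' hadj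
      have heq : insert v M = M := hmax _ hins (Set.subset_insert _ _)
      exact hv (heq ▸ Set.mem_insert v M)
  refine ⟨hdom, ?_⟩
  intro D' hsub hdom'
  by_contra hne
  obtain ⟨m, hmM, hmD⟩ : ∃ m ∈ M, m ∉ D' := by
    by_contra h; push_neg at h; exact hne (Set.Subset.antisymm hsub h)
  obtain ⟨u, huD, hmu⟩ := hdom' m
  have huM : u ∈ M := hsub huD
  rcases mem_closedNbhd'.1 hmu with rfl | hadj
  · exact hmD huD
  · exact hind u huM m hmM hadj

/-- Edge pairs inside a set. -/
def edgePairs (G : SimpleGraph W) (D : Set W) : Set (W × W) :=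
  {p | p.1 ∈ D ∧ p.2 ∈ D ∧ G.Adj p.1 p.2}

/-- Bollobás–Cockayne: a graph with no isolated vertex has a dominating,
open irredundant set. -/
lemma bollobas_cockayne' [Fintype W] (G : SimpleGraph W)
    (hiso : ∀ v : W, ∃ u, G.Adj v u) :
    ∃ D : Set W, IsDomSet G D ∧ IsOpenIrred G D := by
  classical
  set F : Set (Set W) := {D | IsDomSet G D ∧ D.ncard = domNum G} with hF
  have hFne : F.Nonempty := by
    obtain ⟨D, h1, h2⟩ := exists_domNum_set' G
    exact ⟨D, h1, h2⟩
  obtain ⟨D, hDF, hmax⟩ := Set.Finite.exists_maximalFor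
      (fun D => (edgePairs G D).ncard) F (Set.toFinite F) hFne
  obtain ⟨hdom, hcard⟩ := hDF
  refine ⟨D, hdom, ?_⟩
  intro v hv
  by_contra hcon
  push_neg at hcon
  have hpos : 0 < D.ncard := (Set.ncard_pos (Set.toFinite D)).2 ⟨v, hv⟩
  have hsmall : ¬ IsDomSet G (D \ {v}) := by
    intro hd
    have h1 := domNum_le_ncard' hd
    have h2 : (D \ {v}).ncard = D.ncard - 1 :=
      Set.ncard_diff_singleton_of_mem hv
    omega
  have hvnot : ∀ d ∈ D, d ≠ v → v ∉ closedNbhd G d := by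
    intro d hd hdv hvmem
    apply hsmall
    intro w
    obtain ⟨a, haD, hwa⟩ := hdom w
    by_cases hav : a = v
    · subst hav
      rcases mem_closedNbhd'.1 hwa with rfl | hadj
      · exact ⟨d, ⟨hd, by simpa using hdv⟩, hvmem⟩
      · obtain ⟨d', hd', hdv', hw'⟩ := hcon w hadj
        exact ⟨d', ⟨hd', by simpa using hdv'⟩, hw'⟩
    · exact ⟨a, ⟨haD, by simpa using hav⟩, hwa⟩
  obtain ⟨u, huv⟩ := hiso v
  obtain ⟨d'', hd''D, hd''v, hud''⟩ := hcon u huv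
  have huD : u ∉ D := by
    intro huDmem
    apply hsmall
    intro w
    obtain ⟨a, haD, hwa⟩ := hdom w
    by_cases hav : a = v
    · subst hav
      rcases mem_closedNbhd'.1 hwa with rfl | hadj
      · exact ⟨u, ⟨huDmem, by simpa using (G.ne_of_adj huv).symm⟩,
          mem_closedNbhd'.2 (Or.inr huv.symm)⟩
      · obtain ⟨d', h1, h2, h3⟩ := hcon w hadj
        exact ⟨d', ⟨h1, by simpa using h2⟩, h3⟩
    · exact ⟨a, ⟨haD, by simpa using hav⟩, hwa⟩
  set D' : Set W := insert u (D \ {v}) with hD'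
  have hd'dom : IsDomSet G D' := by
    intro w
    obtain ⟨a, haD, hwa⟩ := hdom w
    by_cases hav : a = v
    · subst hav
      rcases mem_closedNbhd'.1 hwa with rfl | hadj
      · exact ⟨u, Set.mem_insert _ _, mem_closedNbhd'.2 (Or.inr huv.symm)⟩
      · obtain ⟨d', h1, h2, h3⟩ := hcon w hadj
        exact ⟨d', Set.mem_insert_of_mem _ ⟨h1, by simpa using h2⟩, h3⟩
    · exact ⟨a, Set.mem_insert_of_mem _ ⟨haD, by simpa using hav⟩, hwa⟩
  have hncard : D'.ncard = domNum G := by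
    have h2 : (D \ {v}).ncard = D.ncard - 1 :=
      Set.ncard_diff_singleton_of_mem hv
    have hunotin : u ∉ D \ {v} := fun h => huD h.1
    rw [hD', Set.ncard_insert_of_notMem hunotin (Set.toFinite _), h2]
    omega
  have hveq : edgePairs G D = edgePairs G (D \ {v}) := by
    ext ⟨p, q⟩
    simp only [edgePairs, Set.mem_setOf_eq, Set.mem_diff, Set.mem_singleton_iff]
    constructor
    · rintro ⟨hp, hq, hadj⟩
      have hpv : p ≠ v := by
        intro hpe
        have hqv : q ≠ v := by
          intro hqe
          rw [hpe, hqe] at hadj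
          exact G.loopless.irrefl v hadj
        apply hvnot q hq hqv
        rw [← hpe]
        exact mem_closedNbhd'.2 (Or.inr hadj.symm)
      have hqv : q ≠ v := by
        intro hqe
        have hpv2 : p ≠ v := by
          intro hpe
          rw [hpe, hqe] at hadj
          exact G.loopless.irrefl v hadj
        apply hvnot p hp hpv2
        rw [← hqe]
        exact mem_closedNbhd'.2 (Or.inr hadj)
      exact ⟨⟨hp, hpv⟩, ⟨hq, hqv⟩, hadj⟩
    · rintro ⟨⟨hp, _⟩, ⟨hq, _⟩, hadj⟩
      exact ⟨hp, hq, hadj⟩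
  have huadj : G.Adj u d'' := by
    rcases mem_closedNbhd'.1 hud'' with rfl | h
    · exact absurd hd''D huD
    · exact h.symm
  have hss : edgePairs G (D \ {v}) ⊂ edgePairs G D' := by
    constructor
    · rintro ⟨p, q⟩ ⟨hp, hq, hadj⟩
      exact ⟨Set.mem_insert_of_mem _ hp, Set.mem_insert_of_mem _ hq, hadj⟩
    · intro hsub
      have hmem : (u, d'') ∈ edgePairs G D' :=
        ⟨Set.mem_insert _ _, Set.mem_insert_of_mem _ ⟨hd''D, by simpa using hd''v⟩, huadj⟩
      exact huD (hsub hmem).1.1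
  have hlt : (edgePairs G D).ncard < (edgePairs G D').ncard := by
    rw [hveq]
    exact Set.ncard_lt_ncard hss (Set.toFinite _)
  have heq : (edgePairs G D').ncard ≤ (edgePairs G D).ncard := hmax (j := D') ⟨hd'dom, hncard⟩ hlt.le
  omega

lemma ncard_prod' {α β : Type*} [Fintype α] [Fintype β] (s : Set α) (t : Set β) :
    (s ×ˢ t).ncard = s.ncard * t.ncard := by
  rw [← Nat.card_coe_set_eq, ← Nat.card_coe_set_eq, ← Nat.card_coe_set_eq,
    Nat.card_congr (Equiv.Set.prod s t), Nat.card_prod]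

lemma boxProd_minimalDomSet' {α β : Type*} [Fintype α] [Fintype β]
    {G : SimpleGraph α} {H : SimpleGraph β} {D : Set α}
    (hdom : IsDomSet G D) (hoi : IsOpenIrred G D) :
    IsMinimalDomSet (G □ H) (D ×ˢ (Set.univ : Set β)) := by
  constructor
  · rintro ⟨g, h⟩
    obtain ⟨d, hd, hgd⟩ := hdom g
    refine ⟨(d, h), ⟨hd, Set.mem_univ _⟩, ?_⟩
    rcases mem_closedNbhd'.1 hgd with rfl | hadj
    · exact self_mem_closedNbhd' _ _
    · exact mem_closedNbhd'.2 (Or.inr (SimpleGraph.boxProd_adj.2 (Or.inl ⟨hadj, rfl⟩)))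
  · intro D' hsub hdom'
    refine Set.Subset.antisymm hsub ?_
    rintro ⟨d, h⟩ ⟨hd, -⟩
    obtain ⟨x, hx, hpriv⟩ := hoi d hd
    have hxd : x ≠ d := (G.ne_of_adj hx).symm
    have hxD : x ∉ D := fun hxD => hpriv x hxD hxd (self_mem_closedNbhd' G x)
    obtain ⟨⟨p, q⟩, hpq, hxh⟩ := hdom' (x, h)
    have hpD : p ∈ D := (hsub hpq).1
    rcases mem_closedNbhd'.1 hxh with heq | hadj
    · have h1 : x = p := congrArg Prod.fst heq
      rw [← h1] at hpD
      exact absurd hpD hxD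
    · rw [SimpleGraph.boxProd_adj] at hadj
      rcases hadj with ⟨hGadj, hq⟩ | ⟨_, hp⟩
      · have hGadj' : G.Adj p x := hGadj
        have hq' : q = h := hq
        have hpd : p = d := by
          by_contra hpd
          exact hpriv p hpD hpd (mem_closedNbhd'.2 (Or.inr hGadj'))
        have heq2 : ((d, h) : α × β) = (p, q) := by rw [hpd, hq']
        rw [heq2]; exact hpq
      · have hp' : p = x := hp
        rw [hp'] at hpD
        exact absurd hpD hxD

/-- Main lemma: part 1 of the theorem. -/
lemma part1' {α β : Type} [Fintype α] [Fintype β] (G : SimpleGraph α) (H : SimpleGraph β)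
    (hGc : G.Connected) (hGcard : 2 ≤ Fintype.card α) (hGwd : WellDominated G)
    (hiso : ∃ x, Isolatable G x) (hHc : H.Connected) (hHcard : 2 ≤ Fintype.card β) :
    ¬ WellDominated (G □ H) := by
  intro hwd
  classical
  obtain ⟨x, I, hIind, hxI, hxN⟩ := hiso
  have hxnotI : x ∉ I := fun h => hxI (Set.mem_biUnion h (self_mem_closedNbhd' G x))
  have hind : IsIndep G (insert x I) := by
    intro a ha b hb hadj
    rcases Set.mem_insert_iff.1 ha with rfl | ha'
    · rcases Set.mem_insert_iff.1 hb with rfl | hb'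
      · exact G.loopless.irrefl _ hadj
      · exact hxI (Set.mem_biUnion hb' (mem_closedNbhd'.2 (Or.inr hadj.symm)))
    · rcases Set.mem_insert_iff.1 hb with rfl | hb'
      · exact hxI (Set.mem_biUnion ha' (mem_closedNbhd'.2 (Or.inr hadj)))
      · exact hIind a ha' b hb' hadj
  obtain ⟨A, hA, hsubA⟩ := exists_maxIndep_superset' G hind
  have hAmin := maxIndep_isMinimalDomSet' hA
  have hAx : x ∈ A := hsubA (Set.mem_insert _ _)
  have hGwd' : domNum G = upperDomNum G := hGwd
  have hkA : A.ncard = domNum G := by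
    have h1 : domNum G ≤ A.ncard := domNum_le_ncard' hAmin.1
    have h2 : A.ncard ≤ upperDomNum G := ncard_le_upperDomNum' hAmin
    omega
  have hk1 : 1 ≤ domNum G := by
    have : 0 < A.ncard := (Set.ncard_pos (Set.toFinite A)).2 ⟨x, hAx⟩
    omega
  obtain ⟨DH, hDH, hDHcard⟩ := exists_domNum_set' H
  have hHiso : ∀ h : β, ∃ h', H.Adj h h' := exists_adj_of_connected' hHc hHcard
  have hHle : domNum H + 1 ≤ Fintype.card β := by
    obtain ⟨b0⟩ : Nonempty β := Fintype.card_pos_iff.1 (by omega)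
    obtain ⟨b1, hb1⟩ := hHiso b0
    have hdomc : IsDomSet H (Set.univ \ {b0}) := by
      intro w
      by_cases hw : w = b0
      · exact ⟨b1, ⟨Set.mem_univ _, by simpa using (H.ne_of_adj hb1).symm⟩,
          mem_closedNbhd'.2 (Or.inr (hw ▸ hb1.symm))⟩
      · exact ⟨w, ⟨Set.mem_univ _, by simpa using hw⟩, self_mem_closedNbhd' H w⟩
    have hle := domNum_le_ncard' hdomc
    have hcc : (Set.univ \ {b0} : Set β).ncard = Fintype.card β - 1 := by
      rw [Set.ncard_diff_singleton_of_mem (Set.mem_univ _),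
        Set.ncard_univ, Nat.card_eq_fintype_card]
    omega
  set Dsmall : Set (α × β) := ((A \ {x}) ×ˢ (Set.univ : Set β)) ∪ (({x} : Set α) ×ˢ DH) with hDs
  have hDsdom : IsDomSet (G □ H) Dsmall := by
    rintro ⟨g, h⟩
    by_cases hgx : g = x
    · subst hgx
      obtain ⟨d, hdDH, hhd⟩ := hDH h
      refine ⟨(g, d), Or.inr ⟨rfl, hdDH⟩, ?_⟩
      rcases mem_closedNbhd'.1 hhd with rfl | hadj
      · exact self_mem_closedNbhd' _ _
      · exact mem_closedNbhd'.2 (Or.inr (SimpleGraph.boxProd_adj.2 (Or.inr ⟨hadj, rfl⟩)))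
    · obtain ⟨a, haA, hga⟩ := hAmin.1 g
      by_cases hax : a = x
      · have hadj : G.Adj x g := by
          rcases mem_closedNbhd'.1 hga with h' | h'
          · rw [hax] at h'; exact absurd h' hgx
          · rw [hax] at h'; exact h'
        obtain ⟨i, hiI, hgi⟩ := Set.mem_iUnion₂.1 (hxN g hadj)
        have hiA : i ∈ A \ {x} := by
          refine ⟨hsubA (Set.mem_insert_of_mem _ hiI), ?_⟩
          simp only [Set.mem_singleton_iff]
          intro h'
          rw [h'] at hiI
          exact hxnotI hiI
        refine ⟨(i, h), Or.inl ⟨hiA, Set.mem_univ _⟩, ?_⟩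
        rcases mem_closedNbhd'.1 hgi with rfl | hadj'
        · exact self_mem_closedNbhd' _ _
        · exact mem_closedNbhd'.2 (Or.inr (SimpleGraph.boxProd_adj.2 (Or.inl ⟨hadj', rfl⟩)))
      · refine ⟨(a, h), Or.inl ⟨⟨haA, by simpa using hax⟩, Set.mem_univ _⟩, ?_⟩
        rcases mem_closedNbhd'.1 hga with rfl | hadj'
        · exact self_mem_closedNbhd' _ _
        · exact mem_closedNbhd'.2 (Or.inr (SimpleGraph.boxProd_adj.2 (Or.inl ⟨hadj', rfl⟩)))
  have hDscard : Dsmall.ncard = (domNum G - 1) * Fintype.card β + domNum H := by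
    have hdisj : Disjoint ((A \ {x}) ×ˢ (Set.univ : Set β)) ({x} ×ˢ DH) := by
      rw [Set.disjoint_left]
      rintro ⟨p, q⟩ ⟨hp, -⟩ ⟨hp2, -⟩
      exact hp.2 hp2
    rw [hDs, Set.ncard_union_eq hdisj (Set.toFinite _) (Set.toFinite _),
      ncard_prod', ncard_prod', Set.ncard_singleton, one_mul,
      Set.ncard_univ, Nat.card_eq_fintype_card, hDHcard,
      Set.ncard_diff_singleton_of_mem hAx, hkA]
  obtain ⟨D, hDdom, hDoi⟩ := bollobas_cockayne' G (exists_adj_of_connected' hGc hGcard)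
  have hbig := boxProd_minimalDomSet' (H := H) hDdom hDoi
  have h1 : (D ×ˢ (Set.univ : Set β)).ncard = D.ncard * Fintype.card β := by
    rw [ncard_prod', Set.ncard_univ, Nat.card_eq_fintype_card]
  have h2 : domNum G ≤ D.ncard := domNum_le_ncard' hDdom
  have h3 : D.ncard * Fintype.card β ≤ upperDomNum (G □ H) := by
    rw [← h1]; exact ncard_le_upperDomNum' hbig
  have h4 : domNum (G □ H) ≤ (domNum G - 1) * Fintype.card β + domNum H := by
    rw [← hDscard]; exact domNum_le_ncard' hDsdom
  have h5 : domNum (G □ H) = upperDomNum (G □ H) := hwd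
  have h6 : domNum G * Fintype.card β ≤ D.ncard * Fintype.card β :=
    Nat.mul_le_mul_right _ h2
  have h7 : (domNum G - 1) * Fintype.card β + Fintype.card β
      = domNum G * Fintype.card β := by
    have hx' : domNum G - 1 + 1 = domNum G := Nat.succ_pred_eq_of_pos hk1
    calc (domNum G - 1) * Fintype.card β + Fintype.card β
        = ((domNum G - 1) + 1) * Fintype.card β := by ring
      _ = domNum G * Fintype.card β := by rw [hx']
  have hchain : domNum G * Fintype.card β
      ≤ (domNum G - 1) * Fintype.card β + domNum H := by
    calc domNum G * Fintype.card β ≤ D.ncard * Fintype.card β := h6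
      _ ≤ upperDomNum (G □ H) := h3
      _ = domNum (G □ H) := h5.symm
      _ ≤ (domNum G - 1) * Fintype.card β + domNum H := h4
  set P := (domNum G - 1) * Fintype.card β with hP
  set Q := domNum G * Fintype.card β with hQ
  omega

end AuxLemmas


/-- If `G` is a nontrivial connected well-dominated graph with an isolatable
vertex, then `G □ H` is not well-dominated for any nontrivial connected `H`.
In particular, if `G` is connected, well-dominated, of order at least `3`, and
`G □ H` is well-dominated for some nontrivial connected `H`, then `δ(G) ≥ 2`. -/
theorem stmt_16 :
    (∀ {α β : Type} [Fintype α] [Fintype β] (G : SimpleGraph α) (H : SimpleGraph β),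
      G.Connected → 2 ≤ Fintype.card α → WellDominated G → (∃ x, Isolatable G x) →
      H.Connected → 2 ≤ Fintype.card β → ¬ WellDominated (G □ H)) ∧
    (∀ {α : Type} [Fintype α] (G : SimpleGraph α),
      G.Connected → 3 ≤ Fintype.card α → WellDominated G →
      (∃ (β : Type) (_ : Fintype β) (H : SimpleGraph β),
        H.Connected ∧ 2 ≤ Fintype.card β ∧ WellDominated (G □ H)) →
      ∀ v : α, ∃ a b : α, a ≠ b ∧ G.Adj v a ∧ G.Adj v b) := by
  constructor
  · intro α β _ _ G H hGc hGcard hGwd hiso hHc hHcard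
    exact part1' G H hGc hGcard hGwd hiso hHc hHcard
  · intro α _ G hGc hGcard hGwd hex v
    classical
    by_contra hcon
    push_neg at hcon
    obtain ⟨y, hy⟩ := exists_adj_of_connected' hGc (by omega) v
    have huniq : ∀ w, G.Adj v w → w = y := by
      intro w hw
      by_contra hne
      exact hcon w y hne hw hy
    have hz : ∃ z, G.Adj y z ∧ z ≠ v := by
      by_contra hcz
      push_neg at hcz
      have hstay : ∀ {a b : α}, G.Walk a b →
          a ∈ ({v, y} : Set α) → b ∈ ({v, y} : Set α) := by
        intro a b p
        induction p with
        | nil => exact id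
        | @cons u v' w hadj p ih =>
          intro ha
          apply ih
          rcases ha with rfl | ha'
          · exact Or.inr (huniq v' hadj)
          · have : u = y := ha'
            subst this
            exact Or.inl (hcz v' hadj)
      obtain ⟨w, hw1, hw2⟩ : ∃ w : α, w ≠ v ∧ w ≠ y := by
        by_contra hcw
        push_neg at hcw
        have hsubu : (Finset.univ : Finset α) ⊆ {v, y} := by
          intro w _
          rcases eq_or_ne w v with rfl | h
          · exact Finset.mem_insert_self _ _
          · rw [hcw w h]
            exact Finset.mem_insert_of_mem (Finset.mem_singleton_self _)
        have hc1 := Finset.card_le_card hsubu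
        have hc2 : ({v, y} : Finset α).card ≤ 2 := by
          have h3 := Finset.card_insert_le v ({y} : Finset α)
          rw [Finset.card_singleton] at h3
          omega
        rw [Finset.card_univ] at hc1
        omega
      obtain ⟨p⟩ := hGc.preconnected v w
      rcases hstay p (Or.inl rfl) with h | h
      · exact hw1 h
      · exact hw2 h
    obtain ⟨z, hzy, hzv⟩ := hz
    have hIso : Isolatable G v := by
      refine ⟨{z}, ?_, ?_, ?_⟩
      · intro a ha b hb hadj
        rw [Set.mem_singleton_iff] at ha hb
        subst ha; subst hb
        exact G.loopless.irrefl _ hadj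
      · intro hmem
        obtain ⟨i, hi, hmem'⟩ := Set.mem_iUnion₂.1 hmem
        rw [Set.mem_singleton_iff] at hi
        subst hi
        rcases mem_closedNbhd'.1 hmem' with h | hadj
        · exact hzv h.symm
        · exact (G.ne_of_adj hzy).symm (huniq i hadj.symm)
      · intro w hw
        have hwy := huniq w hw
        subst hwy
        exact Set.mem_biUnion (Set.mem_singleton z) (mem_closedNbhd'.2 (Or.inr hzy.symm))
    obtain ⟨β, iβ, H, hHc, hHcard, hwd⟩ := hex
    exact @part1' α β inferInstance iβ G H hGc (by omega) hGwd ⟨v, hIso⟩ hHc hHcard hwd
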